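/- Let n ≥ 1 and let S ⊆ {1,…,n} × {1,…,n}. Then there exists a polynomial f ∈ ℚ[X] such that for every finite field F of odd cardinality q = |F|, Σ_{r=0}^n |Sym_{n,r}(F; S)| · q^{n−r} = f(q). -/

import Mathlib

open Matrix Module Finset

section
variable {n : ℕ} {S : Set (Fin n × Fin n)} {F : Type} [Field F]

def ok (S : Set (Fin n × Fin n)) (i j : Fin n) : Prop := (i, j) ∈ S ∧ (j, i) ∈ S
lemma ok_symm (h : ok S i j) : ok S j i := ⟨h.2, h.1⟩
noncomputable instance : ∀ i j : Fin n, Decidable (ok S i j) := fun _ _ => Classical.dec _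
abbrev PP (S : Set (Fin n × Fin n)) := {p : Fin n × Fin n // p.1 ≤ p.2 ∧ ok S p.1 p.2}
noncomputable instance : Fintype (PP S) := Fintype.ofFinite _

def MM (S : Set (Fin n × Fin n)) (F : Type) [Field F] (T : Finset (Fin n)) :
    Matrix (Fin n) (PP S) F := fun i p =>
  (if i = p.1.1 ∧ p.1.2 ∈ T then 1 else 0) +
    (if i = p.1.2 ∧ p.1.1 ∈ T ∧ p.1.1 ≠ p.1.2 then 1 else 0)

noncomputable def ofY (S : Set (Fin n × Fin n)) (y : PP S → F) : Matrix (Fin n) (Fin n) F := fun i j =>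
  if h : i ≤ j ∧ ok S i j then y ⟨(i, j), h⟩
  else if h' : j ≤ i ∧ ok S j i then y ⟨(j, i), h'⟩ else 0

lemma supp_ok {a : Matrix (Fin n) (Fin n) F} (hsym : a.IsSymm)
    (hsupp : ∀ i j, (i, j) ∉ S → a i j = 0) {i j : Fin n} (h : ¬ ok S i j) :
    a i j = 0 := by
  rw [ok, not_and_or] at h
  rcases h with h | h
  · exact hsupp i j h
  · rw [← hsym.apply i j]; exact hsupp j i h

lemma ofY_symm (y : PP S → F) : (ofY S y).IsSymm := by
  rw [Matrix.IsSymm]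
  ext i j
  rw [Matrix.transpose_apply]
  by_cases h1 : i ≤ j ∧ ok S i j <;> by_cases h2 : j ≤ i ∧ ok S j i
  · have : i = j := le_antisymm h1.1 h2.1
    subst this; rfl
  · simp [ofY, h1, h2]
  · simp [ofY, h1, h2]
  · simp [ofY, h1, h2]

lemma ofY_supp (y : PP S → F) : ∀ i j, (i, j) ∉ S → ofY S y i j = 0 := by
  intro i j h
  have h1 : ¬ (i ≤ j ∧ ok S i j) := fun hc => h hc.2.1
  have h2 : ¬ (j ≤ i ∧ ok S j i) := fun hc => h hc.2.2
  simp [ofY, h1, h2]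

lemma toY_ofY (y : PP S → F) : (fun p : PP S => ofY S y p.1.1 p.1.2) = y := by
  funext p
  obtain ⟨⟨i, j⟩, hp⟩ := p
  simp [ofY, hp]

lemma ofY_toY {a : Matrix (Fin n) (Fin n) F} (hsym : a.IsSymm)
    (hsupp : ∀ i j, (i, j) ∉ S → a i j = 0) :
    ofY S (fun p : PP S => a p.1.1 p.1.2) = a := by
  ext i j
  by_cases h1 : i ≤ j ∧ ok S i j
  · simp [ofY, h1]
  · by_cases h2 : j ≤ i ∧ ok S j i
    · simp only [ofY, dif_neg h1, dif_pos h2]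
      exact hsym.apply i j
    · rcases le_total i j with hle | hle
      · have : ¬ ok S i j := fun hc => h1 ⟨hle, hc⟩
        simp [ofY, h1, h2, supp_ok hsym hsupp this]
      · have : ¬ ok S j i := fun hc => h2 ⟨hle, hc⟩
        have z : a j i = 0 := supp_ok hsym hsupp this
        have z' : a i j = 0 := by rw [hsym.apply j i]; exact z
        simp [ofY, h1, h2, z']

lemma sum_PP {β : Type} [AddCommMonoid β] (f : Fin n × Fin n → β) :
    ∑ p : PP S, f p.1 = ∑ q : Fin n × Fin n, if (q.1 ≤ q.2 ∧ ok S q.1 q.2) then f q else 0 := by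
  classical
  rw [← Finset.sum_filter]
  exact (Finset.sum_subtype _ (by simp) f).symm

lemma mulVec_MM (T : Finset (Fin n)) (a : Matrix (Fin n) (Fin n) F) (hsym : a.IsSymm)
    (hsupp : ∀ i j, (i, j) ∉ S → a i j = 0) :
    (MM S F T).mulVec (fun p => a p.1.1 p.1.2)
      = a.mulVec (fun j => if j ∈ T then 1 else 0) := by
  classical
  funext i
  show ∑ p : PP S, MM S F T i p * a p.1.1 p.1.2 = ∑ j, a i j * (if j ∈ T then 1 else 0)
  rw [show (∑ p : PP S, MM S F T i p * a p.1.1 p.1.2)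
      = ∑ q : Fin n × Fin n, if (q.1 ≤ q.2 ∧ ok S q.1 q.2) then
          (((if i = q.1 ∧ q.2 ∈ T then (1:F) else 0) +
            (if i = q.2 ∧ q.1 ∈ T ∧ q.1 ≠ q.2 then 1 else 0)) * a q.1 q.2) else 0 from
    sum_PP (fun q => ((if i = q.1 ∧ q.2 ∈ T then (1:F) else 0) +
            (if i = q.2 ∧ q.1 ∈ T ∧ q.1 ≠ q.2 then 1 else 0)) * a q.1 q.2)]
  rw [Fintype.sum_prod_type]
  have split : ∀ j k : Fin n,
      (if ((j,k).1 ≤ (j,k).2 ∧ ok S (j,k).1 (j,k).2) then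
          (((if i = (j,k).1 ∧ (j,k).2 ∈ T then (1:F) else 0) +
            (if i = (j,k).2 ∧ (j,k).1 ∈ T ∧ (j,k).1 ≠ (j,k).2 then 1 else 0)) * a (j,k).1 (j,k).2) else 0)
      = (if ((j ≤ k ∧ ok S j k) ∧ i = j ∧ k ∈ T) then a j k else 0)
        + (if ((j ≤ k ∧ ok S j k) ∧ i = k ∧ j ∈ T ∧ j ≠ k) then a j k else 0) := by
    intro j k
    by_cases h0 : (j ≤ k ∧ ok S j k) <;> by_cases h1 : (i = j ∧ k ∈ T) <;>
      by_cases h2 : (i = k ∧ j ∈ T ∧ j ≠ k) <;> simp [h0, h1, h2] <;> split_ifs <;>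
        first | ring | tauto
  simp only [split, Finset.sum_add_distrib]
  have e1 : (∑ j, ∑ k, if ((j ≤ k ∧ ok S j k) ∧ i = j ∧ k ∈ T) then a j k else 0)
      = ∑ k, if ((i ≤ k ∧ ok S i k) ∧ k ∈ T) then a i k else 0 := by
    rw [show (∑ j, ∑ k, if ((j ≤ k ∧ ok S j k) ∧ i = j ∧ k ∈ T) then a j k else 0)
        = ∑ j, if i = j then (∑ k, if ((j ≤ k ∧ ok S j k) ∧ k ∈ T) then a j k else 0) else 0 by
      refine Finset.sum_congr rfl fun j _ => ?_
      by_cases hij : i = j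
      · simp [hij]
      · simp [hij]]
    rw [Finset.sum_ite_eq]
    simp
  have e2 : (∑ j, ∑ k, if ((j ≤ k ∧ ok S j k) ∧ i = k ∧ j ∈ T ∧ j ≠ k) then a j k else 0)
      = ∑ j, if ((j ≤ i ∧ ok S j i) ∧ j ∈ T ∧ j ≠ i) then a j i else 0 := by
    rw [Finset.sum_comm]
    rw [show (∑ k, ∑ j, if ((j ≤ k ∧ ok S j k) ∧ i = k ∧ j ∈ T ∧ j ≠ k) then a j k else 0)
        = ∑ k, if i = k then (∑ j, if ((j ≤ k ∧ ok S j k) ∧ j ∈ T ∧ j ≠ k) then a j k else 0) else 0 by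
      refine Finset.sum_congr rfl fun k _ => ?_
      by_cases hik : i = k
      · simp [hik]
      · simp [hik]]
    rw [Finset.sum_ite_eq]
    simp
  rw [e1, e2, ← Finset.sum_add_distrib]
  refine Finset.sum_congr rfl fun k _ => ?_
  by_cases hok : ok S i k
  · by_cases hkT : k ∈ T
    · rcases le_or_gt i k with hle | hlt
      · have h2 : ¬ ((k ≤ i ∧ ok S k i) ∧ k ∈ T ∧ k ≠ i) := by
          rintro ⟨⟨hki, -⟩, -, hne⟩
          exact hne (le_antisymm hki hle)
        rw [if_pos ⟨⟨hle, hok⟩, hkT⟩, if_neg h2]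
        simp [hkT]
      · have h1 : ¬ ((i ≤ k ∧ ok S i k) ∧ k ∈ T) := by
          rintro ⟨⟨hik, -⟩, -⟩
          exact absurd hik (not_le.mpr hlt)
        rw [if_neg h1, if_pos ⟨⟨hlt.le, ok_symm hok⟩, hkT, (hlt.ne : k ≠ i)⟩]
        rw [hsym.apply]
        simp [hkT]
    · simp [hkT]
  · have hz : a i k = 0 := supp_ok hsym hsupp hok
    have hz' : a k i = 0 := by rw [hsym.apply i k]; exact hz
    simp [hok, fun h : ok S k i => hok (ok_symm h), hz, hz']

lemma card_A_eq (T : Finset (Fin n)) :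
    Nat.card {a : Matrix (Fin n) (Fin n) F // a.IsSymm ∧ (∀ i j, (i, j) ∉ S → a i j = 0) ∧
        a.mulVec (fun j => if j ∈ T then 1 else 0) = 0}
      = Nat.card {y : PP S → F // (MM S F T).mulVec y = 0} := by
  refine Nat.card_congr ?_
  refine
    { toFun := fun a => ⟨fun p => a.1 p.1.1 p.1.2, ?_⟩
      invFun := fun y => ⟨ofY S y.1, ofY_symm y.1, ofY_supp y.1, ?_⟩
      left_inv := ?_
      right_inv := ?_ }
  · rw [mulVec_MM T a.1 a.2.1 a.2.2.1]
    exact a.2.2.2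
  · have h := mulVec_MM (S := S) T (ofY S y.1) (ofY_symm y.1) (ofY_supp y.1)
    rw [toY_ofY] at h
    rw [← h]
    exact y.2
  · intro a
    exact Subtype.ext (ofY_toY a.2.1 a.2.2.1)
  · intro y
    exact Subtype.ext (toY_ofY y.1)

lemma card_ker {m k : Type} [Fintype F] [Fintype m] [Fintype k]
    [DecidableEq k] (M : Matrix m k F) :
    Nat.card {y : k → F // M.mulVec y = 0} =
      Fintype.card F ^ (Fintype.card k - M.rank) := by
  classical
  have e : {y : k → F // M.mulVec y = 0} ≃ LinearMap.ker M.mulVecLin :=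
    Equiv.subtypeEquivRight (fun y => by simp [LinearMap.mem_ker])
  haveI : Fintype (LinearMap.ker M.mulVecLin) := Fintype.ofFinite _
  rw [Nat.card_congr e, Nat.card_eq_fintype_card]
  rw [card_eq_pow_finrank (K := F)]
  congr 1
  have h := LinearMap.finrank_range_add_finrank_ker M.mulVecLin
  have hr : M.rank = finrank F (LinearMap.range M.mulVecLin) := rfl
  have hpi : finrank F (k → F) = Fintype.card k := finrank_pi F
  omega

lemma mulVec_MMT (T : Finset (Fin n)) (v : Fin n → F) :
    ((MM S F T)ᵀ.mulVec v = 0) ↔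
      ((∀ k, ok S k k → k ∈ T → v k = 0) ∧
       (∀ i j, ok S i j → i ∈ T → j ∉ T → v j = 0) ∧
       (∀ i j, i ≠ j → ok S i j → i ∈ T → j ∈ T → v i + v j = 0)) := by
  classical
  have comp : ∀ p : PP S, ((MM S F T)ᵀ.mulVec v) p =
      (if p.1.2 ∈ T then v p.1.1 else 0) +
        (if p.1.1 ∈ T ∧ p.1.1 ≠ p.1.2 then v p.1.2 else 0) := by
    intro p
    show (∑ i, (MM S F T)ᵀ p i * v i) = _
    simp only [Matrix.transpose_apply, MM, add_mul, ite_mul, one_mul, zero_mul]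
    rw [Finset.sum_add_distrib]
    congr 1
    · rw [show (∑ i, if i = p.1.1 ∧ p.1.2 ∈ T then v i else 0)
          = ∑ i, if i = p.1.1 then (if p.1.2 ∈ T then v i else 0) else 0 by
        refine Finset.sum_congr rfl fun i _ => ?_
        by_cases h1 : i = p.1.1 <;> by_cases h2 : p.1.2 ∈ T <;> simp [h1, h2]]
      rw [Finset.sum_ite_eq']
      simp
    · rw [show (∑ i, if i = p.1.2 ∧ p.1.1 ∈ T ∧ p.1.1 ≠ p.1.2 then v i else 0)
          = ∑ i, if i = p.1.2 then (if p.1.1 ∈ T ∧ p.1.1 ≠ p.1.2 then v i else 0) else 0 by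
        refine Finset.sum_congr rfl fun i _ => ?_
        by_cases h1 : i = p.1.2 <;> by_cases h2 : p.1.1 ∈ T ∧ p.1.1 ≠ p.1.2 <;> simp [h1, h2]]
      rw [Finset.sum_ite_eq']
      simp
  constructor
  · intro h
    have hp : ∀ p : PP S, (if p.1.2 ∈ T then v p.1.1 else 0) +
        (if p.1.1 ∈ T ∧ p.1.1 ≠ p.1.2 then v p.1.2 else 0) = 0 := by
      intro p; rw [← comp p, h]; rfl
    refine ⟨?_, ?_, ?_⟩
    · intro k hok hkT
      have := hp ⟨(k, k), le_refl k, hok⟩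
      simpa [hkT] using this
    · intro i j hok hiT hjT
      have hne : i ≠ j := fun hc => hjT (hc ▸ hiT)
      rcases le_total i j with hle | hle
      · have := hp ⟨(i, j), hle, hok⟩
        simpa [hiT, hjT, hne] using this
      · have := hp ⟨(j, i), hle, ok_symm hok⟩
        simpa [hiT, hjT, hne.symm] using this
    · intro i j hne hok hiT hjT
      rcases le_total i j with hle | hle
      · have := hp ⟨(i, j), hle, hok⟩
        simpa [hiT, hjT, hne] using this
      · have := hp ⟨(j, i), hle, ok_symm hok⟩
        have h2 := this
        simp [hiT, hjT, hne.symm] at h2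
        linear_combination h2
  · rintro ⟨hC1, hC2, hC3⟩
    funext p
    rw [comp p]
    obtain ⟨⟨i, j⟩, hle, hok⟩ := p
    simp only
    by_cases hij : i = j
    · subst hij
      by_cases hiT : i ∈ T
      · simp [hiT, hC1 i hok hiT]
      · simp [hiT]
    · by_cases hiT : i ∈ T <;> by_cases hjT : j ∈ T
      · have := hC3 i j hij hok hiT hjT
        simp only [if_pos hjT, if_pos (⟨hiT, hij⟩ : i ∈ T ∧ i ≠ j)]
        rw [Pi.zero_apply]
        linear_combination this
      · simp [hiT, hjT, hij, hC2 i j hok hiT hjT]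
      · simp [hiT, hjT, hC2 j i (ok_symm hok) hjT hiT]
      · simp [hiT, hjT]
end

section
variable {n : ℕ} (S : Set (Fin n × Fin n))

def Gr (T : Finset (Fin n)) : SimpleGraph (Fin n) where
  Adj i j := i ≠ j ∧ ok S i j ∧ i ∈ T ∧ j ∈ T
  symm := ⟨fun i j h => ⟨h.1.symm, ⟨h.2.1.2, h.2.1.1⟩, h.2.2.2, h.2.2.1⟩⟩
  loopless := ⟨fun i h => h.1 rfl⟩

def Zset (T : Finset (Fin n)) : Set (Fin n) :=
  {k | (ok S k k ∧ k ∈ T) ∨ ∃ j, ok S k j ∧ j ∈ T ∧ k ∉ T}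

def Good (T : Finset (Fin n)) (C : (Gr S T).ConnectedComponent) : Prop :=
  (∀ i, (Gr S T).connectedComponentMk i = C → i ∉ Zset S T) ∧
  (∀ i (w : (Gr S T).Walk i i), (Gr S T).connectedComponentMk i = C → Even w.length)

noncomputable def nu (T : Finset (Fin n)) : ℕ :=
  Nat.card {C : (Gr S T).ConnectedComponent // Good S T C}

variable {S} {F : Type} [Field F] {T : Finset (Fin n)}

/-- conditions satisfied by kernel vectors -/
def Cond (S : Set (Fin n × Fin n)) (T : Finset (Fin n)) (v : Fin n → F) : Prop :=
  (∀ k, ok S k k → k ∈ T → v k = 0) ∧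
  (∀ i j, ok S i j → i ∈ T → j ∉ T → v j = 0) ∧
  (∀ i j, i ≠ j → ok S i j → i ∈ T → j ∈ T → v i + v j = 0)

lemma cond_edge {v : Fin n → F} (hv : Cond S T v) {i j : Fin n}
    (h : (Gr S T).Adj i j) : v j = - v i := by
  have := hv.2.2 i j h.1 h.2.1 h.2.2.1 h.2.2.2
  linear_combination this

lemma cond_walk {v : Fin n → F} (hv : Cond S T v) {i j : Fin n}
    (w : (Gr S T).Walk i j) : v j = (-1) ^ w.length * v i := by
  induction w with
  | nil => simp
  | cons h p ih =>
    rw [SimpleGraph.Walk.length_cons, ih]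
    rw [cond_edge hv h]
    ring

lemma cond_zset {v : Fin n → F} (hv : Cond S T v) {k : Fin n}
    (hk : k ∈ Zset S T) : v k = 0 := by
  rcases hk with ⟨h1, h2⟩ | ⟨j, hok, hjT, hkT⟩
  · exact hv.1 k h1 h2
  · exact hv.2.1 j k ⟨hok.2, hok.1⟩ hjT hkT

lemma cond_bad {v : Fin n → F} (h2 : (2 : F) ≠ 0) (hv : Cond S T v) {i : Fin n}
    (hbad : ¬ Good S T ((Gr S T).connectedComponentMk i)) : v i = 0 := by
  rw [Good, not_and_or] at hbad
  rcases hbad with hb | hb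
  · push_neg at hb
    obtain ⟨j, hj, hjZ⟩ := hb
    have hr : (Gr S T).Reachable j i := SimpleGraph.ConnectedComponent.exact hj
    obtain ⟨w⟩ := hr
    rw [cond_walk hv w, cond_zset hv hjZ, mul_zero]
  · push_neg at hb
    obtain ⟨j, w, hj, hodd⟩ := hb
    have hodd' : Odd w.length := Nat.not_even_iff_odd.mp hodd
    have hj0 : v j = 0 := by
      have := cond_walk hv w
      rw [hodd'.neg_one_pow] at this
      have h2v : (2 : F) * v j = 0 := by linear_combination this
      rcases mul_eq_zero.mp h2v with h | h
      · exact absurd h h2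
      · exact h
    have hr : (Gr S T).Reachable j i := SimpleGraph.ConnectedComponent.exact hj
    obtain ⟨w'⟩ := hr
    rw [cond_walk hv w', hj0, mul_zero]

lemma parity_eq {C : (Gr S T).ConnectedComponent} (hC : Good S T C) {u i : Fin n}
    (hu : (Gr S T).connectedComponentMk u = C) (w1 w2 : (Gr S T).Walk u i) :
    ((-1 : F)) ^ w1.length = (-1) ^ w2.length := by
  have hev : Even (w1.append w2.reverse).length := hC.2 u _ hu
  rw [SimpleGraph.Walk.length_append, SimpleGraph.Walk.length_reverse] at hev
  rcases Nat.even_add.mp hev with h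
  by_cases h1 : Even w1.length
  · rw [h1.neg_one_pow, (h.mp h1).neg_one_pow]
  · rw [(Nat.not_even_iff_odd.mp h1).neg_one_pow,
      (Nat.not_even_iff_odd.mp (fun hc => h1 (h.mpr hc))).neg_one_pow]

end

section
variable {n : ℕ} {S : Set (Fin n × Fin n)} {F : Type} [Field F] {T : Finset (Fin n)}

noncomputable instance : ∀ C : (Gr S T).ConnectedComponent, Decidable (Good S T C) :=
  fun _ => Classical.dec _

noncomputable def wch (S : Set (Fin n × Fin n)) (T : Finset (Fin n)) (i : Fin n) :
    (Gr S T).Walk (Quot.out ((Gr S T).connectedComponentMk i)) i :=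
  (SimpleGraph.ConnectedComponent.exact (Quot.out_eq ((Gr S T).connectedComponentMk i))).some

noncomputable def Psi (S : Set (Fin n × Fin n)) (T : Finset (Fin n))
    (t : {C : (Gr S T).ConnectedComponent // Good S T C} → F) : Fin n → F := fun i =>
  if h : Good S T ((Gr S T).connectedComponentMk i) then
    (-1) ^ (wch S T i).length * t ⟨(Gr S T).connectedComponentMk i, h⟩ else 0

lemma psi_cond (t : {C : (Gr S T).ConnectedComponent // Good S T C} → F) :
    Cond S T (Psi S T t) := by
  refine ⟨?_, ?_, ?_⟩
  · intro k hok hkT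
    have hZ : k ∈ Zset S T := Or.inl ⟨hok, hkT⟩
    have hbad : ¬ Good S T ((Gr S T).connectedComponentMk k) := fun hg => hg.1 k rfl hZ
    simp [Psi, hbad]
  · intro i j hok hiT hjT
    have hZ : j ∈ Zset S T := Or.inr ⟨i, ⟨hok.2, hok.1⟩, hiT, hjT⟩
    have hbad : ¬ Good S T ((Gr S T).connectedComponentMk j) := fun hg => hg.1 j rfl hZ
    simp [Psi, hbad]
  · intro i j hne hok hiT hjT
    have hadj : (Gr S T).Adj i j := ⟨hne, hok, hiT, hjT⟩
    have hmk : (Gr S T).connectedComponentMk i = (Gr S T).connectedComponentMk j :=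
      SimpleGraph.ConnectedComponent.connectedComponentMk_eq_of_adj hadj
    by_cases hg : Good S T ((Gr S T).connectedComponentMk i)
    · have hgj : Good S T ((Gr S T).connectedComponentMk j) := hmk ▸ hg
      have ht : t ⟨(Gr S T).connectedComponentMk j, hgj⟩
          = t ⟨(Gr S T).connectedComponentMk i, hg⟩ :=
        congrArg t (Subtype.ext hmk.symm)
      have hl : ((-1 : F)) ^ (wch S T j).length = (-1) ^ ((wch S T i).length + 1) := by
        have hp := parity_eq (F := F) hgj (Quot.out_eq _) (wch S T j)
          (((wch S T i).concat hadj).copy (congrArg Quot.out hmk) rfl)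
        rw [hp, SimpleGraph.Walk.length_copy, SimpleGraph.Walk.length_concat]
      simp only [Psi, dif_pos hg, dif_pos hgj]
      rw [ht, hl]
      ring
    · have hgj : ¬ Good S T ((Gr S T).connectedComponentMk j) := fun hc => hg (hmk ▸ hc)
      simp [Psi, hg, hgj]

lemma card_cond [Fintype F] (h2 : (2 : F) ≠ 0) :
    Nat.card {v : Fin n → F // Cond S T v} = Fintype.card F ^ nu S T := by
  have e : {v : Fin n → F // Cond S T v} ≃
      ({C : (Gr S T).ConnectedComponent // Good S T C} → F) :=
    { toFun := fun v C => v.1 (Quot.out C.1)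
      invFun := fun t => ⟨Psi S T t, psi_cond t⟩
      left_inv := by
        intro v
        refine Subtype.ext (funext fun i => ?_)
        by_cases h : Good S T ((Gr S T).connectedComponentMk i)
        · simp only [Psi, dif_pos h]
          exact (cond_walk v.2 (wch S T i)).symm
        · simp only [Psi, dif_neg h]
          exact (cond_bad h2 v.2 h).symm
      right_inv := by
        intro t
        funext C
        have hmkout : (Gr S T).connectedComponentMk (Quot.out C.1) = C.1 := Quot.out_eq _
        have hg : Good S T ((Gr S T).connectedComponentMk (Quot.out C.1)) :=
          hmkout.symm ▸ C.2
        have ht : t ⟨(Gr S T).connectedComponentMk (Quot.out C.1), hg⟩ = t C :=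
          congrArg t (Subtype.ext hmkout)
        have hl : ((-1 : F)) ^ (wch S T (Quot.out C.1)).length = 1 := by
          have hp := parity_eq (F := F) hg (Quot.out_eq _) (wch S T (Quot.out C.1))
            ((SimpleGraph.Walk.nil).copy (congrArg Quot.out hmkout).symm rfl)
          rw [hp, SimpleGraph.Walk.length_copy, SimpleGraph.Walk.length_nil, pow_zero]
        simp only [Psi, dif_pos hg]
        rw [ht, hl, one_mul] }
  rw [Nat.card_congr e]
  haveI : Finite (Gr S T).ConnectedComponent := Quot.finite _
  rw [Nat.card_fun, Nat.card_eq_fintype_card]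
  rfl
end

section
variable {n : ℕ} {S : Set (Fin n × Fin n)} {F : Type} [Field F] {T : Finset (Fin n)}

noncomputable def DD (S : Set (Fin n × Fin n)) : ℕ := Nat.card (PP S)

noncomputable def eps (S : Set (Fin n × Fin n)) (T : Finset (Fin n)) : ℕ :=
  DD S - (n - nu S T)

lemma card_VV [Fintype F] (h2 : (2 : F) ≠ 0) :
    Nat.card {v : Fin n → F // (MM S F T)ᵀ.mulVec v = 0} = Fintype.card F ^ nu S T := by
  rw [Nat.card_congr (Equiv.subtypeEquivRight (fun v => (mulVec_MMT T v)))]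
  exact card_cond h2

lemma rank_MM [Fintype F] (h2 : (2 : F) ≠ 0) :
    (MM S F T).rank = n - nu S T ∧ nu S T ≤ n ∧ n - nu S T ≤ DD S := by
  classical
  have hq : 2 ≤ Fintype.card F := Fintype.one_lt_card
  have h1 := card_ker (MM S F T)ᵀ
  rw [card_VV h2] at h1
  have hexp : nu S T = Fintype.card (Fin n) - (MM S F T)ᵀ.rank :=
    Nat.pow_right_injective hq h1
  have hle : (MM S F T)ᵀ.rank ≤ Fintype.card (Fin n) := by
    simpa using (MM S F T)ᵀ.rank_le_card_width
  have htr : (MM S F T)ᵀ.rank = (MM S F T).rank := Matrix.rank_transpose _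
  have hwidth : (MM S F T).rank ≤ DD S := by
    have := (MM S F T).rank_le_card_width
    rwa [show Fintype.card (PP S) = DD S from (Nat.card_eq_fintype_card).symm] at this
  rw [Fintype.card_fin] at hexp hle
  refine ⟨by omega, by omega, by omega⟩

lemma card_A [Fintype F] (h2 : (2 : F) ≠ 0) :
    Nat.card {a : Matrix (Fin n) (Fin n) F // a.IsSymm ∧ (∀ i j, (i, j) ∉ S → a i j = 0) ∧
        a.mulVec (fun j => if j ∈ T then 1 else 0) = 0}
      = Fintype.card F ^ eps S T := by
  classical
  obtain ⟨hrank, hnu, hDD⟩ := rank_MM (S := S) (T := T) h2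
  rw [card_A_eq, card_ker (MM S F T), hrank,
    show Fintype.card (PP S) = DD S from (Nat.card_eq_fintype_card).symm]
  rfl
end

section
variable {n : ℕ} {S : Set (Fin n × Fin n)} {F : Type} [Field F]

/-- diagonal conjugation -/
def conj (c : Fin n → F) (a : Matrix (Fin n) (Fin n) F) : Matrix (Fin n) (Fin n) F :=
  fun i j => c i * a i j * c j

lemma conj_symm {c : Fin n → F} {a : Matrix (Fin n) (Fin n) F} (ha : a.IsSymm) :
    (conj c a).IsSymm := by
  rw [Matrix.IsSymm]
  ext i j
  rw [Matrix.transpose_apply, conj, conj]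
  rw [ha.apply]
  ring

lemma conj_supp {c : Fin n → F} {a : Matrix (Fin n) (Fin n) F}
    (hs : ∀ i j, (i, j) ∉ S → a i j = 0) :
    ∀ i j, (i, j) ∉ S → conj c a i j = 0 := by
  intro i j h
  rw [conj, hs i j h]
  ring

lemma conj_mulVec (c : Fin n → F) (a : Matrix (Fin n) (Fin n) F) (u : Fin n → F) :
    (conj c a).mulVec u = fun i => c i * a.mulVec (fun j => c j * u j) i := by
  funext i
  show (∑ j, conj c a i j * u j) = c i * ∑ j, a i j * (c j * u j)
  rw [Finset.mul_sum]
  refine Finset.sum_congr rfl fun j _ => ?_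
  rw [conj]
  ring

lemma conj_conj (c : Fin n → F) (hc : ∀ i, c i ≠ 0) (a : Matrix (Fin n) (Fin n) F) :
    conj (fun i => (c i)⁻¹) (conj c a) = a := by
  ext i j
  rw [conj, conj]
  field_simp
  rw [div_eq_iff (mul_ne_zero (hc i) (hc j))]
  ring

lemma card_scale [DecidableEq F] (x : Fin n → F) :
    Nat.card {a : Matrix (Fin n) (Fin n) F // a.IsSymm ∧ (∀ i j, (i, j) ∉ S → a i j = 0) ∧
        a.mulVec x = 0}
      = Nat.card {a : Matrix (Fin n) (Fin n) F // a.IsSymm ∧ (∀ i j, (i, j) ∉ S → a i j = 0) ∧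
        a.mulVec (fun j => if j ∈ Finset.univ.filter (fun i => x i ≠ 0) then 1 else 0) = 0} := by
  set d : Fin n → F := fun i => if x i = 0 then 1 else x i with hd
  have hdne : ∀ i, d i ≠ 0 := by
    intro i
    rw [hd]
    by_cases h : x i = 0 <;> simp [h]
  have hdinv : ∀ i, (d i)⁻¹ ≠ 0 := fun i => inv_ne_zero (hdne i)
  have hd1T : (fun j => d j * (if j ∈ Finset.univ.filter (fun i => x i ≠ 0) then (1:F) else 0))
      = x := by
    funext j
    by_cases h : x j = 0 <;> simp [hd, h]
  have hd1T' : (fun j => (d j)⁻¹ * x j)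
      = (fun j => if j ∈ Finset.univ.filter (fun i => x i ≠ 0) then (1:F) else 0) := by
    funext j
    by_cases h : x j = 0 <;> simp [hd, h]
  refine Nat.card_congr ?_
  refine
    { toFun := fun a => ⟨conj d a.1, conj_symm a.2.1, conj_supp a.2.2.1, ?_⟩
      invFun := fun b => ⟨conj (fun i => (d i)⁻¹) b.1, conj_symm b.2.1, conj_supp b.2.2.1, ?_⟩
      left_inv := ?_
      right_inv := ?_ }
  · rw [conj_mulVec, hd1T, show a.1.mulVec x = 0 from a.2.2.2]
    funext i
    simp
  · rw [conj_mulVec, hd1T', show b.1.mulVec _ = 0 from b.2.2.2]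
    funext i
    simp
  · intro a
    exact Subtype.ext (conj_conj d hdne a.1)
  · intro b
    refine Subtype.ext ?_
    have : conj d (conj (fun i => (d i)⁻¹) b.1) = b.1 := by
      have h := conj_conj (fun i => (d i)⁻¹) hdinv b.1
      simpa using h
    exact this
end

section
variable {n : ℕ} {S : Set (Fin n × Fin n)} {F : Type} [Field F]

lemma card_supp [Fintype F] [DecidableEq F] (T : Finset (Fin n)) :
    (Finset.univ.filter
        (fun x : Fin n → F => Finset.univ.filter (fun i => x i ≠ 0) = T)).card
      = (Fintype.card F - 1) ^ T.card := by
  classical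
  have hiff : ∀ x : Fin n → F,
      (Finset.univ.filter (fun i => x i ≠ 0) = T) ↔ (∀ i, x i ≠ 0 ↔ i ∈ T) := by
    intro x
    rw [Finset.ext_iff]
    apply forall_congr'
    intro i
    simp
  have e : {x : Fin n → F // Finset.univ.filter (fun i => x i ≠ 0) = T}
      ≃ (T → {u : F // u ≠ 0}) :=
    { toFun := fun x i => ⟨x.1 i.1, ((hiff x.1).mp x.2 i.1).mpr i.2⟩
      invFun := fun y =>
        ⟨fun i => if h : i ∈ T then (y ⟨i, h⟩).1 else 0, by
          rw [hiff]
          intro i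
          constructor
          · intro h
            by_contra hc
            rw [dif_neg hc] at h
            exact h rfl
          · intro h
            rw [dif_pos h]
            exact (y ⟨i, h⟩).2⟩
      left_inv := by
        intro x
        refine Subtype.ext (funext fun i => ?_)
        by_cases h : i ∈ T
        · simp [h]
        · have hx0 : x.1 i = 0 := by
            by_contra hc
            exact h (((hiff x.1).mp x.2 i).mp hc)
          simp [h, hx0]
      right_inv := by
        intro y
        funext i
        exact Subtype.ext (by simp [dif_pos i.2]) }
  rw [← Fintype.card_subtype, ← Nat.card_eq_fintype_card, Nat.card_congr e, Nat.card_fun]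
  rw [Nat.card_eq_finsetCard]
  congr 1
  rw [← Nat.card_congr (unitsEquivNeZero (G₀ := F)), Nat.card_units,
    Nat.card_eq_fintype_card]

lemma key_count [Fintype F] (h2 : (2 : F) ≠ 0) :
    ∑ r ∈ Finset.range (n + 1),
        Nat.card {a : Matrix (Fin n) (Fin n) F //
            a.IsSymm ∧ (∀ i j, (i, j) ∉ S → a i j = 0) ∧ a.rank = r}
          * Fintype.card F ^ (n - r)
      = ∑ T : Finset (Fin n), (Fintype.card F - 1) ^ T.card * Fintype.card F ^ eps S T := by
  classical
  set P : Matrix (Fin n) (Fin n) F → Prop :=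
    fun a => a.IsSymm ∧ (∀ i j, (i, j) ∉ S → a i j = 0) with hP
  set A : Finset (Matrix (Fin n) (Fin n) F) := Finset.univ.filter P with hA
  -- step 1 : LHS = ∑_{a ∈ A} q ^ (n - rank a)
  have step1 : ∑ r ∈ Finset.range (n + 1),
      Nat.card {a : Matrix (Fin n) (Fin n) F //
          a.IsSymm ∧ (∀ i j, (i, j) ∉ S → a i j = 0) ∧ a.rank = r}
        * Fintype.card F ^ (n - r)
      = ∑ a ∈ A, Fintype.card F ^ (n - a.rank) := by
    rw [← Finset.sum_fiberwise_of_maps_to (g := fun a : Matrix (Fin n) (Fin n) F => a.rank)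
      (t := Finset.range (n + 1)) (fun a _ => Finset.mem_range.mpr
        (Nat.lt_succ_of_le (by simpa using a.rank_le_card_height)))]
    refine Finset.sum_congr rfl fun r _ => ?_
    have hc : Nat.card {a : Matrix (Fin n) (Fin n) F //
        a.IsSymm ∧ (∀ i j, (i, j) ∉ S → a i j = 0) ∧ a.rank = r}
        = (A.filter (fun a => a.rank = r)).card := by
      rw [Nat.card_eq_fintype_card, Fintype.card_subtype, hA, Finset.filter_filter]
      congr 1
      apply Finset.filter_congr
      intro a _
      rw [hP]
      tauto
    rw [hc, Finset.card_eq_sum_ones, Finset.sum_mul, one_mul]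
    refine Finset.sum_congr rfl fun a ha => ?_
    rw [(Finset.mem_filter.mp ha).2]
  -- step 2 : pointwise kernel counting
  have step2 : ∀ a : Matrix (Fin n) (Fin n) F, Fintype.card F ^ (n - a.rank)
      = (Finset.univ.filter (fun x : Fin n → F => a.mulVec x = 0)).card := by
    intro a
    have := card_ker a
    rw [Nat.card_eq_fintype_card, Fintype.card_subtype, Fintype.card_fin] at this
    exact this.symm
  -- step 3 : swap
  have step3 : ∑ a ∈ A, (Finset.univ.filter (fun x : Fin n → F => a.mulVec x = 0)).card
      = ∑ x : Fin n → F, (A.filter (fun a => a.mulVec x = 0)).card := by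
    simp only [Finset.card_filter]
    rw [Finset.sum_comm]
  -- step 4 : pointwise in x
  have step4 : ∀ x : Fin n → F, (A.filter (fun a => a.mulVec x = 0)).card
      = Fintype.card F ^ eps S (Finset.univ.filter (fun i => x i ≠ 0)) := by
    intro x
    have hc : (A.filter (fun a => a.mulVec x = 0)).card
        = Nat.card {a : Matrix (Fin n) (Fin n) F //
            a.IsSymm ∧ (∀ i j, (i, j) ∉ S → a i j = 0) ∧ a.mulVec x = 0} := by
      rw [Nat.card_eq_fintype_card, Fintype.card_subtype, hA, Finset.filter_filter]
      congr 1
      apply Finset.filter_congr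
      intro a _
      rw [hP]
      tauto
    rw [hc, card_scale x, card_A h2]
  -- step 5 : group by support
  have step5 : ∑ x : Fin n → F,
      Fintype.card F ^ eps S (Finset.univ.filter (fun i => x i ≠ 0))
      = ∑ T : Finset (Fin n), (Fintype.card F - 1) ^ T.card * Fintype.card F ^ eps S T := by
    rw [← Finset.sum_fiberwise_of_maps_to
      (g := fun x : Fin n → F => Finset.univ.filter (fun i => x i ≠ 0))
      (t := (Finset.univ : Finset (Finset (Fin n)))) (fun x _ => Finset.mem_univ _)]
    refine Finset.sum_congr rfl fun T _ => ?_
    rw [show (∑ x ∈ Finset.univ.filter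
          (fun x : Fin n → F => Finset.univ.filter (fun i => x i ≠ 0) = T),
          Fintype.card F ^ eps S (Finset.univ.filter (fun i => x i ≠ 0)))
        = ∑ x ∈ Finset.univ.filter
          (fun x : Fin n → F => Finset.univ.filter (fun i => x i ≠ 0) = T),
          Fintype.card F ^ eps S T from
      Finset.sum_congr rfl fun x hx => by rw [(Finset.mem_filter.mp hx).2]]
    rw [Finset.sum_const, card_supp T, smul_eq_mul]
  rw [step1]
  rw [Finset.sum_congr rfl fun a _ => step2 a]
  rw [step3]
  rw [Finset.sum_congr rfl fun x _ => step4 x]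
  rw [step5]
end




/-- For `n ≥ 1` and a set `S` of positions, there is a polynomial `f ∈ ℚ[X]` such that
for every finite field `F` of odd cardinality `q`, the sum
`∑_{r=0}^n |Sym_{n,r}(F; S)| · q^(n-r)` equals `f(q)`, where `Sym_{n,r}(F; S)` is the set
of symmetric `n × n` matrices over `F` of rank `r` supported on `S`. -/
theorem sym_rank_average_polynomial (n : ℕ) (hn : 1 ≤ n) (S : Set (Fin n × Fin n)) :
    ∃ f : Polynomial ℚ,
      ∀ (F : Type) [Field F] [Fintype F], Odd (Fintype.card F) →
        ∑ r ∈ Finset.range (n + 1),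
            (Nat.card {a : Matrix (Fin n) (Fin n) F //
                a.IsSymm ∧ (∀ i j, (i, j) ∉ S → a i j = 0) ∧ a.rank = r} : ℚ) *
              (Fintype.card F : ℚ) ^ (n - r)
          = f.eval (Fintype.card F : ℚ) := by

  refine ⟨∑ T : Finset (Fin n),
    (Polynomial.X - 1) ^ T.card * Polynomial.X ^ (eps S T), ?_⟩
  intro F _ _ hodd
  have h2 : (2 : F) ≠ 0 := by
    intro hc
    haveI := ringChar.charP F
    have hdvd : ringChar F ∣ 2 := (CharP.cast_eq_zero_iff F (ringChar F) 2).mp (by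
      exact_mod_cast hc)
    rcases CharP.char_is_prime_or_zero F (ringChar F) with hp | hp
    · have hchar : ringChar F = 2 := (Nat.prime_dvd_prime_iff_eq hp Nat.prime_two).mp hdvd
      have heven := FiniteField.even_card_of_char_two hchar
      have hodd' := Nat.odd_iff.mp hodd
      omega
    · rw [hp] at hdvd
      exact absurd (zero_dvd_iff.mp hdvd) (by norm_num)
  have hk := key_count (S := S) (F := F) h2
  have hq1 : 1 ≤ Fintype.card F := Fintype.card_pos
  calc
    ∑ r ∈ Finset.range (n + 1),
        (Nat.card {a : Matrix (Fin n) (Fin n) F //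
            a.IsSymm ∧ (∀ i j, (i, j) ∉ S → a i j = 0) ∧ a.rank = r} : ℚ) *
          (Fintype.card F : ℚ) ^ (n - r)
        = ((∑ r ∈ Finset.range (n + 1),
            Nat.card {a : Matrix (Fin n) (Fin n) F //
                a.IsSymm ∧ (∀ i j, (i, j) ∉ S → a i j = 0) ∧ a.rank = r}
              * Fintype.card F ^ (n - r) : ℕ) : ℚ) := by
      push_cast
      rfl
    _ = ((∑ T : Finset (Fin n),
          (Fintype.card F - 1) ^ T.card * Fintype.card F ^ eps S T : ℕ) : ℚ) := by
      rw [hk]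
    _ = ∑ T : Finset (Fin n),
          ((Fintype.card F : ℚ) - 1) ^ T.card * (Fintype.card F : ℚ) ^ eps S T := by
      push_cast [Nat.cast_sub hq1]
      rfl
    _ = Polynomial.eval (Fintype.card F : ℚ) (∑ T : Finset (Fin n),
          (Polynomial.X - 1) ^ T.card * Polynomial.X ^ (eps S T)) := by
      rw [Polynomial.eval_finset_sum]
      refine Finset.sum_congr rfl fun T _ => ?_
      simp
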